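/- Being isogenous is an equivalence relation on semiperfect rings: if f : R → S is a surjection of semiperfect rings of characteristic p whose kernel I satisfies Φ^n(I) = 0 for some n, then f factors through Φ^n : R → R, yielding a map g : S → R which is also an isogeny. -/
import Mathlib


/-- Being isogenous is an equivalence relation on semiperfect rings:
if `f : R → S` is a surjection of semiperfect rings of characteristic `p` whose kernel
is killed by `Φ^n`, then `f` factors through `Φ^n : R → R`, yielding a map `g : S → R`
which is also an isogeny. -/
theorem stmt_2 (p n : ℕ) (hp : p.Prime) {R S : Type*} [CommRing R] [CommRing S]
    [CharP R p] [CharP S p]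
    (hsurjR : ∀ x : R, ∃ y : R, y ^ p = x)
    (hsurjS : ∀ x : S, ∃ y : S, y ^ p = x)
    (f : R →+* S) (hf : Function.Surjective f)
    (hker : ∀ x ∈ RingHom.ker f, x ^ p ^ n = 0) :
    ∃ g : S →+* R,
      (∀ x : R, g (f x) = x ^ p ^ n) ∧
      Function.Surjective g ∧
      ∃ m : ℕ, ∀ y ∈ RingHom.ker g, y ^ p ^ m = 0 := by
  haveI := Fact.mk hp
  haveI : ExpChar R p := .prime hp
  haveI : ExpChar S p := .prime hp
  have key : ∀ x x' : R, f x = f x' → x ^ p ^ n = x' ^ p ^ n := by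
    intro x x' h
    have hk : x - x' ∈ RingHom.ker f := by simp [RingHom.mem_ker, h]
    have h0 := hker _ hk
    rw [sub_pow_expChar_pow] at h0
    exact sub_eq_zero.mp h0
  choose sec hsec using hf
  refine ⟨{ toFun := fun s => (sec s) ^ p ^ n,
            map_one' := ?_, map_mul' := ?_, map_zero' := ?_, map_add' := ?_ },
          ?_, ?_, ?_⟩
  · have : f (sec 1) = f 1 := by rw [hsec, map_one]
    simpa using key _ _ this
  · intro a b
    have : f (sec (a * b)) = f (sec a * sec b) := by rw [hsec, map_mul, hsec, hsec]
    simpa [mul_pow] using key _ _ this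
  · have : f (sec 0) = f 0 := by rw [hsec, map_zero]
    simpa [zero_pow (pow_ne_zero n hp.ne_zero)] using key _ _ this
  · intro a b
    have : f (sec (a + b)) = f (sec a + sec b) := by rw [hsec, map_add, hsec, hsec]
    simpa [add_pow_expChar_pow] using key _ _ this
  · intro x
    exact key _ _ (hsec (f x))
  · intro r
    have : ∀ k : ℕ, ∃ y : R, y ^ p ^ k = r := by
      intro k
      induction k with
      | zero => exact ⟨r, by simp⟩
      | succ k ih =>
        obtain ⟨y, hy⟩ := ih
        obtain ⟨z, hz⟩ := hsurjR y
        exact ⟨z, by rw [pow_succ', pow_mul, hz, hy]⟩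
    obtain ⟨y, hy⟩ := this n
    exact ⟨f y, by simpa [hy] using key _ _ (hsec (f y))⟩
  · refine ⟨n, fun y hy => ?_⟩
    have h0 : (sec y) ^ p ^ n = 0 := hy
    have : y = f (sec y) := (hsec y).symm
    rw [this, ← map_pow, h0, map_zero]
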